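/- For x,y,z,w ∈ ℝ let Q(x,y,z,w) be the binary cubic with coefficients (x³/3 − xz², x²y − 2xzw − yz², xy² − xw² − 2yzw, y³/3 − yw²). Then a coefficient vector q = (q₁,q₂,q₃,q₄) ∈ ℝ⁴ lies in the image of Q (over all real x,y,z,w) if and only if either Δ₃(q) > 0, or q is the cube of a real linear form, i.e. there exist α,β ∈ ℝ with (q₁,q₂,q₃,q₄) = (α³, 3α²β, 3αβ², β³). -/

import Mathlib

noncomputable section

/-- The discriminant of a binary cubic `q 0 • u₁³ + q 1 • u₁²u₂ + q 2 • u₁u₂² + q 3 • u₂³`. -/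
def disc3 (q : Fin 4 → ℝ) : ℝ :=
  q 1 ^ 2 * q 2 ^ 2 - 4 * q 0 * q 2 ^ 3 - 4 * q 1 ^ 3 * q 3 +
    18 * q 0 * q 1 * q 2 * q 3 - 27 * q 0 ^ 2 * q 3 ^ 2

/-- The coefficient vector of the binary cubic
`Q(x,y,z,w) = (1/3)(x u₁ + y u₂)³ − (x u₁ + y u₂)(z u₁ + w u₂)²`. -/
def Qcoeff (x y z w : ℝ) : Fin 4 → ℝ :=
  ![x ^ 3 / 3 - x * z ^ 2, x ^ 2 * y - 2 * x * z * w - y * z ^ 2,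
    x * y ^ 2 - x * w ^ 2 - 2 * y * z * w, y ^ 3 / 3 - y * w ^ 2]

/-- Every real number has a real cube root. -/
lemma cbrt_exists (v : ℝ) : ∃ r : ℝ, r ^ 3 = v := by
  rcases le_total 0 v with hv | hv
  · refine ⟨v ^ ((3 : ℝ)⁻¹), ?_⟩
    rw [← Real.rpow_natCast (v ^ ((3:ℝ)⁻¹)) 3, ← Real.rpow_mul hv]
    norm_num
  · refine ⟨-((-v) ^ ((3 : ℝ)⁻¹)), ?_⟩
    have hv' : (0:ℝ) ≤ -v := by linarith
    have h1 : ((-v) ^ ((3:ℝ)⁻¹)) ^ (3:ℕ) = -v := by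
      rw [← Real.rpow_natCast ((-v) ^ ((3:ℝ)⁻¹)) 3, ← Real.rpow_mul hv']
      norm_num
    have h2 : (-((-v) ^ ((3 : ℝ)⁻¹))) ^ (3:ℕ) = -(((-v) ^ ((3:ℝ)⁻¹)) ^ (3:ℕ)) := by ring
    rw [h2, h1, neg_neg]

set_option maxHeartbeats 1000000 in
/-- A monic real cubic with positive discriminant has three distinct real roots,
expressed via Vieta. -/
lemma cubic_roots (a b c : ℝ)
    (hD : 0 < a^2*b^2 - 4*b^3 - 4*a^3*c + 18*a*b*c - 27*c^2) :
    ∃ r1 r2 r3 : ℝ, r1 < r2 ∧ r2 < r3 ∧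
      a = -(r1+r2+r3) ∧ b = r1*r2+r1*r3+r2*r3 ∧ c = -(r1*r2*r3) := by
  obtain ⟨p, hp_def⟩ : ∃ x : ℝ, x = b - a^2/3 := ⟨_, rfl⟩
  obtain ⟨Q, hQ_def⟩ : ∃ x : ℝ, x = c - a*b/3 + 2*a^3/27 := ⟨_, rfl⟩
  have hD' : 0 < -4*p^3 - 27*Q^2 := by
    have heq : -4*p^3 - 27*Q^2 = a^2*b^2 - 4*b^3 - 4*a^3*c + 18*a*b*c - 27*c^2 := by
      rw [hp_def, hQ_def]; ring
    rw [heq]; exact hD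
  have hp : p < 0 := by nlinarith [sq_nonneg Q, sq_nonneg p]
  have hp3 : (0:ℝ) < -p/3 := by linarith
  obtain ⟨σ, hσ0, hσ2⟩ : ∃ σ : ℝ, 0 < σ ∧ σ^2 = -p/3 :=
    ⟨Real.sqrt (-p/3), Real.sqrt_pos.mpr hp3, Real.sq_sqrt (le_of_lt hp3)⟩
  have cont : Continuous (fun t : ℝ => t^3 + p*t + Q) := by fun_prop
  -- values at the critical points
  have hvm : (-σ)^3 + p*(-σ) + Q = -(2*p/3)*σ + Q := by linear_combination (-σ) * hσ2
  have hvp : σ^3 + p*σ + Q = (2*p/3)*σ + Q := by linear_combination σ * hσ2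
  have hprodval : (-(2*p/3)*σ + Q) * ((2*p/3)*σ + Q) = Q^2 + 4*p^3/27 := by
    linear_combination (-(4*p^2/9)) * hσ2
  have hprod : (-(2*p/3)*σ + Q) * ((2*p/3)*σ + Q) < 0 := by
    rw [hprodval]; linarith
  have hdiff : (2*p/3)*σ + Q < -(2*p/3)*σ + Q := by
    nlinarith [mul_pos (show (0:ℝ) < -p by linarith) hσ0]
  have hv1 : 0 < -(2*p/3)*σ + Q := by nlinarith
  have hv2 : (2*p/3)*σ + Q < 0 := by nlinarith
  have hgmσ : 0 < (-σ)^3 + p*(-σ) + Q := by rw [hvm]; exact hv1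
  have hgσ : σ^3 + p*σ + Q < 0 := by rw [hvp]; exact hv2
  -- a big bound
  obtain ⟨M, hM1, hMσ, hMp, hMQ⟩ :
      ∃ M : ℝ, 1 ≤ M ∧ σ < M ∧ |p| + 1 ≤ M ∧ |Q| + 1 ≤ M := by
    refine ⟨1 + |p| + |Q| + σ, ?_, ?_, ?_, ?_⟩ <;>
      [skip; skip; skip; skip] <;>
      nlinarith [abs_nonneg p, abs_nonneg Q, hσ0]
  have hM0 : (0:ℝ) < M := lt_of_lt_of_le one_pos hM1
  have hP1 : (0:ℝ) ≤ (M - 1) * M * M :=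
    mul_nonneg (mul_nonneg (by linarith) (le_of_lt hM0)) (le_of_lt hM0)
  have hP2 : -|p| * M ≤ p * M := mul_le_mul_of_nonneg_right (neg_abs_le p) (le_of_lt hM0)
  have hP3 : p * M ≤ |p| * M := mul_le_mul_of_nonneg_right (le_abs_self p) (le_of_lt hM0)
  have hP4 : |p| * M ≤ (M - 1) * M :=
    mul_le_mul_of_nonneg_right (by linarith) (le_of_lt hM0)
  have hgM : 0 < M^3 + p*M + Q := by
    nlinarith [le_abs_self Q, neg_abs_le Q]
  have hgmM : (-M)^3 + p*(-M) + Q < 0 := by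
    nlinarith [le_abs_self Q, neg_abs_le Q]
  -- three roots via IVT
  obtain ⟨t1, ht1mem, ht1⟩ : ∃ t1 ∈ Set.Icc (-M) (-σ), t1^3 + p*t1 + Q = 0 := by
    have h := intermediate_value_Icc (show -M ≤ -σ by linarith) cont.continuousOn
    have h0 : (0:ℝ) ∈ Set.Icc ((-M)^3 + p*(-M) + Q) ((-σ)^3 + p*(-σ) + Q) :=
      ⟨le_of_lt hgmM, le_of_lt hgmσ⟩
    obtain ⟨t, ht, ht0⟩ := h h0
    exact ⟨t, ht, ht0⟩
  obtain ⟨t2, ht2mem, ht2⟩ : ∃ t2 ∈ Set.Icc (-σ) σ, t2^3 + p*t2 + Q = 0 := by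
    have h := intermediate_value_Icc' (show -σ ≤ σ by linarith) cont.continuousOn
    have h0 : (0:ℝ) ∈ Set.Icc (σ^3 + p*σ + Q) ((-σ)^3 + p*(-σ) + Q) :=
      ⟨le_of_lt hgσ, le_of_lt hgmσ⟩
    obtain ⟨t, ht, ht0⟩ := h h0
    exact ⟨t, ht, ht0⟩
  obtain ⟨t3, ht3mem, ht3⟩ : ∃ t3 ∈ Set.Icc σ M, t3^3 + p*t3 + Q = 0 := by
    have h := intermediate_value_Icc (le_of_lt hMσ) cont.continuousOn
    have h0 : (0:ℝ) ∈ Set.Icc (σ^3 + p*σ + Q) (M^3 + p*M + Q) :=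
      ⟨le_of_lt hgσ, le_of_lt hgM⟩
    obtain ⟨t, ht, ht0⟩ := h h0
    exact ⟨t, ht, ht0⟩
  have h1σ : t1 < -σ := lt_of_le_of_ne ht1mem.2 (fun h => by
    rw [h] at ht1; rw [ht1] at hgmσ; exact lt_irrefl 0 hgmσ)
  have h2σl : -σ < t2 := lt_of_le_of_ne ht2mem.1 (fun h => by
    rw [← h] at ht2; rw [ht2] at hgmσ; exact lt_irrefl 0 hgmσ)
  have h2σr : t2 < σ := lt_of_le_of_ne ht2mem.2 (fun h => by
    rw [h] at ht2; rw [ht2] at hgσ; exact lt_irrefl 0 hgσ)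
  have h3σ : σ < t3 := lt_of_le_of_ne ht3mem.1 (fun h => by
    rw [← h] at ht3; rw [ht3] at hgσ; exact lt_irrefl 0 hgσ)
  have ht12 : t1 < t2 := by linarith
  have ht23 : t2 < t3 := by linarith
  -- shift back
  obtain ⟨s1, hs1⟩ : ∃ s : ℝ, s = t1 - a/3 := ⟨_, rfl⟩
  obtain ⟨s2, hs2⟩ : ∃ s : ℝ, s = t2 - a/3 := ⟨_, rfl⟩
  obtain ⟨s3, hs3⟩ : ∃ s : ℝ, s = t3 - a/3 := ⟨_, rfl⟩
  have hf1 : s1^3 + a*s1^2 + b*s1 + c = 0 := by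
    rw [hs1]; linear_combination ht1 - t1 * hp_def - hQ_def
  have hf2 : s2^3 + a*s2^2 + b*s2 + c = 0 := by
    rw [hs2]; linear_combination ht2 - t2 * hp_def - hQ_def
  have hf3 : s3^3 + a*s3^2 + b*s3 + c = 0 := by
    rw [hs3]; linear_combination ht3 - t3 * hp_def - hQ_def
  have hlt12 : s1 < s2 := by rw [hs1, hs2]; linarith
  have hlt23 : s2 < s3 := by rw [hs2, hs3]; linarith
  have hs12 : s1 - s2 ≠ 0 := sub_ne_zero.mpr (ne_of_lt hlt12)
  have hs13 : s1 - s3 ≠ 0 := sub_ne_zero.mpr (ne_of_lt (lt_trans hlt12 hlt23))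
  have hs23 : s2 - s3 ≠ 0 := sub_ne_zero.mpr (ne_of_lt hlt23)
  have e1 : (s1-s2) * ((a+(s1+s2+s3))*(s1+s2) + (b - (s1*s2+s1*s3+s2*s3))) = 0 := by
    linear_combination hf1 - hf2
  have e2 : (s1-s3) * ((a+(s1+s2+s3))*(s1+s3) + (b - (s1*s2+s1*s3+s2*s3))) = 0 := by
    linear_combination hf1 - hf3
  have f1 := (mul_eq_zero.mp e1).resolve_left hs12
  have f2 := (mul_eq_zero.mp e2).resolve_left hs13
  have eA : (s2 - s3) * (a + (s1+s2+s3)) = 0 := by linear_combination f1 - f2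
  have hA : a + (s1+s2+s3) = 0 := (mul_eq_zero.mp eA).resolve_left hs23
  have hB : b - (s1*s2+s1*s3+s2*s3) = 0 := by linear_combination f1 - (s1+s2)*hA
  have hC : c + s1*s2*s3 = 0 := by linear_combination hf1 - s1^2*hA - s1*hB
  exact ⟨s1, s2, s3, hlt12, hlt23, by linarith, by linarith, by linarith⟩

set_option maxHeartbeats 1000000 in
/-- Key construction: if the leading coefficient is nonzero and the discriminant is
positive, then `q` is in the image of `Qcoeff`. -/
lemma key_construction (q : Fin 4 → ℝ) (h0 : q 0 ≠ 0) (hd : 0 < disc3 q) :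
    ∃ x y z w : ℝ, Qcoeff x y z w = q := by
  have h04 : 0 < (q 0)^4 := by positivity
  have hDm : 0 < (q 1/q 0)^2*(q 2/q 0)^2 - 4*(q 2/q 0)^3 - 4*(q 1/q 0)^3*(q 3/q 0)
      + 18*(q 1/q 0)*(q 2/q 0)*(q 3/q 0) - 27*(q 3/q 0)^2 := by
    have heq : (q 1/q 0)^2*(q 2/q 0)^2 - 4*(q 2/q 0)^3 - 4*(q 1/q 0)^3*(q 3/q 0)
        + 18*(q 1/q 0)*(q 2/q 0)*(q 3/q 0) - 27*(q 3/q 0)^2 = disc3 q / (q 0)^4 := by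
      rw [disc3]; field_simp
    rw [heq]
    exact div_pos hd h04
  obtain ⟨r1, r2, r3, h12, h23, ha, hb, hc⟩ := cubic_roots _ _ _ hDm
  have hq1 : q 1 = -(q 0)*(r1+r2+r3) := by
    rw [div_eq_iff h0] at ha; linear_combination ha
  have hq2 : q 2 = q 0*(r1*r2+r1*r3+r2*r3) := by
    rw [div_eq_iff h0] at hb; linear_combination hb
  have hq3 : q 3 = -(q 0)*(r1*r2*r3) := by
    rw [div_eq_iff h0] at hc; linear_combination hc
  have h13 : r1 < r3 := lt_trans h12 h23
  obtain ⟨u, hu0, hu⟩ : ∃ u : ℝ, 0 < u ∧ u^2 = 3 :=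
    ⟨Real.sqrt 3, Real.sqrt_pos.mpr (by norm_num), Real.sq_sqrt (by norm_num)⟩
  have hAne : 12*((r3-r1)*(r2-r1)*(r2-r3)) ≠ 0 := by
    refine mul_ne_zero (by norm_num) (mul_ne_zero (mul_ne_zero ?_ ?_) ?_)
    · exact sub_ne_zero.mpr (ne_of_gt h13)
    · exact sub_ne_zero.mpr (ne_of_gt h12)
    · exact sub_ne_zero.mpr (ne_of_lt h23)
  obtain ⟨h, hh⟩ := cbrt_exists (-(q 0) * u / (12*((r3-r1)*(r2-r1)*(r2-r3))))
  have hh' : 12*((r3-r1)*(r2-r1)*(r2-r3)) * h^3 = -(q 0)*u := by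
    have h2 := (eq_div_iff hAne).mp hh
    linear_combination h2
  have hK2 : 12*((r3-r1)*(r2-r1)*(r2-r3)) * (u * h ^ 3) = -3 * q 0 := by
    linear_combination u * hh' - q 0 * hu
  have hK3 : 12*((r3-r1)*(r2-r1)*(r2-r3)) * (u^3 * h ^ 3) = -9 * q 0 := by
    linear_combination u^2 * hK2 - 3 * q 0 * hu
  refine ⟨u*h*(r2-r3), -(u*h*r1*(r2-r3)), -(h*((r2-r3)+2*(r3-r1))),
    h*(r1*(r2-r3)+2*(r3-r1)*r2), ?_⟩
  have hc0 : Qcoeff (u*h*(r2-r3)) (-(u*h*r1*(r2-r3))) (-(h*((r2-r3)+2*(r3-r1))))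
      (h*(r1*(r2-r3)+2*(r3-r1)*r2)) 0 = q 0 := by
    show (u*h*(r2-r3))^3/3 - (u*h*(r2-r3)) * (-(h*((r2-r3)+2*(r3-r1))))^2 = q 0
    apply mul_left_cancel₀ hAne
    linear_combination
      (r3^3 + r2*r3^2 - r2^2*r3 - r2^3 - 4*r1*r3^2 + 4*r1*r2^2 + 4*r1^2*r3 - 4*r1^2*r2) * hK2
      + (-(r3^3)/3 + r2*r3^2 - r2^2*r3 + r2^3/3) * hK3
  have hc1 : Qcoeff (u*h*(r2-r3)) (-(u*h*r1*(r2-r3))) (-(h*((r2-r3)+2*(r3-r1))))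
      (h*(r1*(r2-r3)+2*(r3-r1)*r2)) 1 = q 1 := by
    show (u*h*(r2-r3))^2 * (-(u*h*r1*(r2-r3)))
        - 2*(u*h*(r2-r3))*(-(h*((r2-r3)+2*(r3-r1))))*(h*(r1*(r2-r3)+2*(r3-r1)*r2))
        - (-(u*h*r1*(r2-r3))) * (-(h*((r2-r3)+2*(r3-r1))))^2 = q 1
    apply mul_left_cancel₀ hAne
    linear_combination
      (-4*r2*r3^3 + 4*r2^3*r3 + r1*r3^3 + 9*r1*r2*r3^2 - 9*r1*r2^2*r3 - r1*r2^3
        - 4*r1^3*r3 + 4*r1^3*r2) * hK2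
      + (r1*r3^3 - 3*r1*r2*r3^2 + 3*r1*r2^2*r3 - r1*r2^3) * hK3
      - 12*((r3-r1)*(r2-r1)*(r2-r3)) * hq1
  have hc2 : Qcoeff (u*h*(r2-r3)) (-(u*h*r1*(r2-r3))) (-(h*((r2-r3)+2*(r3-r1))))
      (h*(r1*(r2-r3)+2*(r3-r1)*r2)) 2 = q 2 := by
    show (u*h*(r2-r3)) * (-(u*h*r1*(r2-r3)))^2
        - (u*h*(r2-r3)) * (h*(r1*(r2-r3)+2*(r3-r1)*r2))^2
        - 2*(-(u*h*r1*(r2-r3)))*(-(h*((r2-r3)+2*(r3-r1))))*(h*(r1*(r2-r3)+2*(r3-r1)*r2)) = q 2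
    apply mul_left_cancel₀ hAne
    linear_combination
      (4*r2^2*r3^3 - 4*r2^3*r3^2 - r1^2*r3^3 - 9*r1^2*r2*r3^2 + 9*r1^2*r2^2*r3 + r1^2*r2^3
        + 4*r1^3*r3^2 - 4*r1^3*r2^2) * hK2
      + (-(r1^2*r3^3) + 3*r1^2*r2*r3^2 - 3*r1^2*r2^2*r3 + r1^2*r2^3) * hK3
      - 12*((r3-r1)*(r2-r1)*(r2-r3)) * hq2
  have hc3 : Qcoeff (u*h*(r2-r3)) (-(u*h*r1*(r2-r3))) (-(h*((r2-r3)+2*(r3-r1))))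
      (h*(r1*(r2-r3)+2*(r3-r1)*r2)) 3 = q 3 := by
    show (-(u*h*r1*(r2-r3)))^3/3
        - (-(u*h*r1*(r2-r3))) * (h*(r1*(r2-r3)+2*(r3-r1)*r2))^2 = q 3
    apply mul_left_cancel₀ hAne
    linear_combination
      (-4*r1*r2^2*r3^3 + 4*r1*r2^3*r3^2 + 4*r1^2*r2*r3^3 - 4*r1^2*r2^3*r3 - r1^3*r3^3
        - r1^3*r2*r3^2 + r1^3*r2^2*r3 + r1^3*r2^3) * hK2
      + (r1^3*r3^3/3 - r1^3*r2*r3^2 + r1^3*r2^2*r3 - r1^3*r2^3/3) * hK3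
      - 12*((r3-r1)*(r2-r1)*(r2-r3)) * hq3
  funext i
  fin_cases i
  · exact hc0
  · exact hc1
  · exact hc2
  · exact hc3

/-- The shear `q(u₁, u₂) ↦ q(u₁, l·u₁ + u₂)` on coefficient vectors. -/
def shear (l : ℝ) (q : Fin 4 → ℝ) : Fin 4 → ℝ :=
  ![q 0 + q 1*l + q 2*l^2 + q 3*l^3, q 1 + 2*q 2*l + 3*q 3*l^2, q 2 + 3*q 3*l, q 3]

lemma shear_disc (l : ℝ) (q : Fin 4 → ℝ) : disc3 (shear l q) = disc3 q := by
  simp only [disc3, shear, Matrix.cons_val_zero, Matrix.cons_val_one, Matrix.head_cons,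
    Matrix.cons_val_two, Matrix.tail_cons, Matrix.cons_val_three]
  ring

lemma shear_Qcoeff (l x y z w : ℝ) :
    shear l (Qcoeff x y z w) = Qcoeff (x+l*y) y (z+l*w) w := by
  funext i
  fin_cases i <;>
    simp [shear, Qcoeff, Matrix.cons_val_zero, Matrix.cons_val_one, Matrix.head_cons,
      Matrix.cons_val_two, Matrix.tail_cons, Matrix.cons_val_three] <;>
    ring

lemma shear_inv (l : ℝ) (q : Fin 4 → ℝ) : shear (-l) (shear l q) = q := by
  funext i
  fin_cases i <;>
    simp [shear, Matrix.cons_val_zero, Matrix.cons_val_one, Matrix.head_cons,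
      Matrix.cons_val_two, Matrix.tail_cons, Matrix.cons_val_three] <;>
    ring

theorem stmt17 (q : Fin 4 → ℝ) :
    (∃ x y z w : ℝ, Qcoeff x y z w = q) ↔
      (0 < disc3 q ∨ ∃ α β : ℝ, q = ![α ^ 3, 3 * α ^ 2 * β, 3 * α * β ^ 2, β ^ 3]) := by
  constructor
  · rintro ⟨x, y, z, w, rfl⟩
    by_cases hD : x*w - y*z = 0
    · right
      by_cases hx : x = 0
      · -- x = 0 : then y*z = 0
        by_cases hy : y = 0
        · subst hx; subst hy
          refine ⟨0, 0, ?_⟩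
          funext i
          fin_cases i <;> norm_num [Qcoeff]
        · have hyz : y * z = 0 := by rw [hx] at hD; linarith
          have hz : z = 0 := (mul_eq_zero.mp hyz).resolve_left hy
          subst hx; subst hz
          obtain ⟨β, hβ⟩ := cbrt_exists (y^3/3 - y*w^2)
          refine ⟨0, β, ?_⟩
          funext i
          fin_cases i
          · show (0:ℝ)^3/3 - 0*0^2 = 0^3
            norm_num
          · show (0:ℝ)^2*y - 2*0*0*w - y*0^2 = 3*0^2*β
            ring
          · show (0:ℝ)*y^2 - 0*w^2 - 2*y*0*w = 3*0*β^2
            ring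
          · show y^3/3 - y*w^2 = β^3
            linear_combination -hβ
      · -- x ≠ 0: z = μ x, w = μ y with μ = z/x
        obtain ⟨μ, hμ_def⟩ : ∃ m : ℝ, m = z/x := ⟨_, rfl⟩
        have hz : z = μ*x := by rw [hμ_def]; field_simp
        have hw : w = μ*y := by
          rw [hμ_def, eq_comm, div_mul_eq_mul_div, div_eq_iff hx]
          linear_combination -hD
        obtain ⟨e, he⟩ := cbrt_exists (1/3 - μ^2)
        subst hz; subst hw
        refine ⟨e*x, e*y, ?_⟩
        funext i
        fin_cases i
        · show x^3/3 - x*(μ*x)^2 = (e*x)^3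
          linear_combination (-(x^3)) * he
        · show x^2*y - 2*x*(μ*x)*(μ*y) - y*(μ*x)^2 = 3*(e*x)^2*(e*y)
          linear_combination (-(3*x^2*y)) * he
        · show x*y^2 - x*(μ*y)^2 - 2*y*(μ*x)*(μ*y) = 3*(e*x)*(e*y)^2
          linear_combination (-(3*x*y^2)) * he
        · show y^3/3 - y*(μ*y)^2 = (e*y)^3
          linear_combination (-(y^3)) * he
    · left
      have heq : disc3 (Qcoeff x y z w) = 4/3 * (x*w - y*z)^6 := by
        simp only [disc3, Qcoeff, Matrix.cons_val_zero, Matrix.cons_val_one, Matrix.head_cons,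
          Matrix.cons_val_two, Matrix.tail_cons, Matrix.cons_val_three, Fin.isValue]
        ring
      rw [heq]
      positivity
  · rintro (hd | ⟨α, β, rfl⟩)
    · -- positive discriminant: shear to make leading coefficient nonzero
      obtain ⟨l, hl⟩ : ∃ l : ℝ, (shear l q) 0 ≠ 0 := by
        by_contra hall
        push_neg at hall
        have e0 := hall 0
        have e1 := hall 1
        have e2 := hall 2
        have e3 := hall 3
        simp only [shear, Matrix.cons_val_zero] at e0 e1 e2 e3
        norm_num at e0 e1 e2 e3
        have hq0 : q 0 = 0 := by linarith
        have hq1 : q 1 = 0 := by linarith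
        have hq2 : q 2 = 0 := by linarith
        have hq3 : q 3 = 0 := by linarith
        rw [disc3, hq0, hq1, hq2, hq3] at hd
        norm_num at hd
      have hd' : 0 < disc3 (shear l q) := by rw [shear_disc]; exact hd
      obtain ⟨x, y, z, w, hx⟩ := key_construction (shear l q) hl hd'
      refine ⟨x + (-l)*y, y, z + (-l)*w, w, ?_⟩
      rw [← shear_Qcoeff, hx, shear_inv]
    · -- perfect cube
      obtain ⟨c, hc⟩ := cbrt_exists 3
      refine ⟨c*α, c*β, 0, 0, ?_⟩
      funext i
      fin_cases i
      · show (c*α)^3/3 - (c*α)*0^2 = α^3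
        linear_combination α^3/3 * hc
      · show (c*α)^2*(c*β) - 2*(c*α)*0*0 - (c*β)*0^2 = 3*α^2*β
        linear_combination α^2*β * hc
      · show (c*α)*(c*β)^2 - (c*α)*0^2 - 2*(c*β)*0*0 = 3*α*β^2
        linear_combination α*β^2 * hc
      · show (c*β)^3/3 - (c*β)*0^2 = β^3
        linear_combination β^3/3 * hc
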